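/- For every finite simple graph G, ι_2(G) ≤ (ω(G) + Δ(G) + 1)/2. -/

import Mathlib

open Finset

variable {V : Type*} [Fintype V] [DecidableEq V]

/-- A (proper) coloring of `G`: a partition of the vertex set into nonempty independent sets. -/
def IsColoring (G : SimpleGraph V) (C : Finset (Finset V)) : Prop :=
  (∀ I ∈ C, I.Nonempty) ∧
  (∀ v : V, ∃! I, I ∈ C ∧ v ∈ I) ∧
  (∀ I ∈ C, ∀ v ∈ I, ∀ w ∈ I, ¬ G.Adj v w)

/-- The frame of a coloring: the multiset of the orders of its color classes. -/
def Frame (C : Finset (Finset V)) : Multiset ℕ :=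
  C.val.map Finset.card

/-- The directed edge `(v, w)` is `C`-lonely: `w` lies in a color class `I` not containing `v`
and `N(v) ∩ I = {w}`. -/
def Lonely (G : SimpleGraph V) (C : Finset (Finset V)) (v w : V) : Prop :=
  ∃ I ∈ C, v ∉ I ∧ w ∈ I ∧ ∀ x ∈ I, (G.Adj v x ↔ x = w)

/-- The chromatic number: the minimum number of color classes in a proper coloring. -/
noncomputable def chi (G : SimpleGraph V) : ℕ :=
  sInf {n | ∃ C : Finset (Finset V), IsColoring G C ∧ C.card = n}

/-- An optimal coloring: a proper coloring with `χ(G)` color classes. -/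
def IsOptimalColoring (G : SimpleGraph V) (C : Finset (Finset V)) : Prop :=
  IsColoring G C ∧ C.card = chi G

/-- A (directed) path in the `C`-lonely graph `L_C(G)`, as a nonempty duplicate-free list of
vertices whose consecutive pairs are `C`-lonely edges. -/
def IsLonelyPath (G : SimpleGraph V) (C : Finset (Finset V)) (p : List V) : Prop :=
  p ≠ [] ∧ p.Nodup ∧ List.Chain' (Lonely G C) p

/-- The stinginess `ι(G)`: the maximum number of singleton color classes appearing in an
optimal coloring of `G`. -/
noncomputable def stinginess (G : SimpleGraph V) : ℕ :=
  sSup {n | ∃ C : Finset (Finset V), IsOptimalColoring G C ∧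
    (C.filter fun I => I.card = 1).card = n}

/-- The independence number `α(G)`. -/
noncomputable def indepNum (G : SimpleGraph V) : ℕ :=
  sSup {n | ∃ s : Finset V, (∀ v ∈ s, ∀ w ∈ s, ¬ G.Adj v w) ∧ s.card = n}

/-- An `r`-bounded coloring has all color classes of order at most `r`. -/
def RBounded (r : ℕ) (C : Finset (Finset V)) : Prop :=
  ∀ I ∈ C, I.card ≤ r

/-- `χ_r(G)`: the minimum number of color classes in an `r`-bounded coloring of `G`. -/
noncomputable def chiR (G : SimpleGraph V) (r : ℕ) : ℕ :=
  sInf {n | ∃ C : Finset (Finset V), IsColoring G C ∧ RBounded r C ∧ C.card = n}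

/-- An optimal `r`-bounded coloring. -/
def IsOptimalRBounded (G : SimpleGraph V) (r : ℕ) (C : Finset (Finset V)) : Prop :=
  IsColoring G C ∧ RBounded r C ∧ C.card = chiR G r

/-- `M_r(G)`: the maximum number of order-`r` color classes in an optimal `r`-bounded
coloring of `G`. -/
noncomputable def Mr (G : SimpleGraph V) (r : ℕ) : ℕ :=
  sSup {n | ∃ C : Finset (Finset V), IsOptimalRBounded G r C ∧
    (C.filter fun I => I.card = r).card = n}

/-- The `r`-bounded stinginess `ι_r(G)`: the maximum number of singleton color classes in an
optimal `r`-bounded coloring of `G`. -/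
noncomputable def stinginessR (G : SimpleGraph V) (r : ℕ) : ℕ :=
  sSup {n | ∃ C : Finset (Finset V), IsOptimalRBounded G r C ∧
    (C.filter fun I => I.card = 1).card = n}

/-- `P` is a frame property: membership in `P` only depends on the frame. -/
def IsFrameProperty (G : SimpleGraph V) (P : Finset (Finset V) → Prop) : Prop :=
  ∀ C C' : Finset (Finset V), IsColoring G C → IsColoring G C' →
    Frame C = Frame C' → P C → P C'

/-- `P` is singleton-friendly: `P` is preserved by merging two singleton color classes. -/
def IsSingletonFriendly (G : SimpleGraph V) (P : Finset (Finset V) → Prop) : Prop :=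
  ∀ C : Finset (Finset V), IsColoring G C → ∀ a b : V, a ≠ b → ¬ G.Adj a b →
    ({a} : Finset V) ∈ C → ({b} : Finset V) ∈ C → P C →
      P (insert ({a, b} : Finset V) ((C.erase {a}).erase {b}))

/-- A `P`-optimal coloring: a coloring satisfying `P` with the minimum number of color classes
among colorings satisfying `P`. -/
def IsPOptimal (G : SimpleGraph V) (P : Finset (Finset V) → Prop)
    (C : Finset (Finset V)) : Prop :=
  IsColoring G C ∧ P C ∧
    ∀ C' : Finset (Finset V), IsColoring G C' → P C' → C.card ≤ C'.card

/-- `Frame_m(C)`: the entries of the frame of `C` that are at least `m`. -/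
def FrameGe (m : ℕ) (C : Finset (Finset V)) : Multiset ℕ :=
  (Frame C).filter (fun k => m ≤ k)

/-- The matching number `ν(G)`: the maximum number of edges in a matching of `G`. -/
noncomputable def matchingNumber (G : SimpleGraph V) : ℕ :=
  sSup {n | ∃ M : G.Subgraph, M.IsMatching ∧ M.edgeSet.ncard = n}
lemma merge_coloring (G : SimpleGraph V) (C : Finset (Finset V))
    (hC : IsColoring G C) {a b : V} (hab : a ≠ b) (hadj : ¬ G.Adj a b)
    (ha : ({a} : Finset V) ∈ C) (hb : ({b} : Finset V) ∈ C) :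
    IsColoring G (insert ({a, b} : Finset V) ((C.erase {a}).erase {b})) ∧
    (insert ({a, b} : Finset V) ((C.erase {a}).erase {b})).card + 1 = C.card := by
  obtain ⟨hne, huniq, hindep⟩ := hC
  have hab' : ({a} : Finset V) ≠ {b} := by
    simp only [Finset.singleton_injective.ne_iff]; exact hab
  have habC : ({a, b} : Finset V) ∉ C := by
    intro h
    have h1 : ({a, b} : Finset V) = {a} :=
      (huniq a).unique ⟨h, by simp⟩ ⟨ha, by simp⟩
    have : b ∈ ({a} : Finset V) := h1 ▸ (by simp : b ∈ ({a, b} : Finset V))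
    simp at this; exact hab this.symm
  have hbe : ({b} : Finset V) ∈ C.erase {a} := Finset.mem_erase.mpr ⟨hab'.symm, hb⟩
  have hnotmem : ({a, b} : Finset V) ∉ (C.erase {a}).erase {b} := fun h =>
    habC (Finset.mem_of_mem_erase (Finset.mem_of_mem_erase h))
  have hsub : ∀ J ∈ (C.erase {a}).erase {b}, J ∈ C := fun J h =>
    Finset.mem_of_mem_erase (Finset.mem_of_mem_erase h)
  refine ⟨⟨?_, ?_, ?_⟩, ?_⟩
  · intro I hI
    rcases Finset.mem_insert.mp hI with rfl | hI
    · exact ⟨a, by simp⟩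
    · exact hne I (hsub I hI)
  · intro v
    by_cases hv : v = a ∨ v = b
    · refine ⟨{a, b}, ⟨Finset.mem_insert_self _ _, by rcases hv with rfl | rfl <;> simp⟩, ?_⟩
      rintro J ⟨hJ, hvJ⟩
      rcases Finset.mem_insert.mp hJ with rfl | hJ
      · rfl
      · exfalso
        have hJC := hsub J hJ
        rcases hv with rfl | rfl
        · have : J = {v} := (huniq v).unique ⟨hJC, hvJ⟩ ⟨ha, by simp⟩
          subst this
          exact (Finset.mem_erase.mp (Finset.mem_of_mem_erase hJ)).1 rfl
        · have : J = {v} := (huniq v).unique ⟨hJC, hvJ⟩ ⟨hb, by simp⟩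
          subst this
          exact (Finset.mem_erase.mp hJ).1 rfl
    · push_neg at hv
      obtain ⟨J, ⟨hJC, hvJ⟩, hJu⟩ := huniq v
      have hJa : J ≠ {a} := by rintro rfl; simp at hvJ; exact hv.1 hvJ
      have hJb : J ≠ {b} := by rintro rfl; simp at hvJ; exact hv.2 hvJ
      refine ⟨J, ⟨Finset.mem_insert_of_mem
        (Finset.mem_erase.mpr ⟨hJb, Finset.mem_erase.mpr ⟨hJa, hJC⟩⟩), hvJ⟩, ?_⟩
      rintro J' ⟨hJ', hvJ'⟩
      rcases Finset.mem_insert.mp hJ' with rfl | hJ'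
      · exfalso; rcases Finset.mem_insert.mp hvJ' with rfl | h
        · exact hv.1 rfl
        · simp at h; exact hv.2 h
      · exact hJu J' ⟨hsub J' hJ', hvJ'⟩
  · intro I hI v hv w hw
    rcases Finset.mem_insert.mp hI with rfl | hI
    · simp only [Finset.mem_insert, Finset.mem_singleton] at hv hw
      rcases hv with rfl | rfl <;> rcases hw with rfl | rfl
      · exact G.irrefl
      · exact hadj
      · exact fun h => hadj h.symm
      · exact G.irrefl
    · exact hindep I (hsub I hI) v hv w hw
  · rw [Finset.card_insert_of_notMem hnotmem,
      Finset.card_erase_of_mem hbe, Finset.card_erase_of_mem ha]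
    have : 1 ≤ (C.erase {a}).card := Finset.card_pos.mpr ⟨_, hbe⟩
    have : 1 ≤ C.card := Finset.card_pos.mpr ⟨_, ha⟩
    have := Finset.card_erase_of_mem ha
    omega

lemma singleton_clique (G : SimpleGraph V) [DecidableRel G.Adj] (C : Finset (Finset V))
    (hC : IsOptimalRBounded G 2 C) :
    ((C.filter fun I => I.card = 1).card : ℕ) ≤ G.cliqueNum := by
  obtain ⟨hcol, hbdd, hopt⟩ := hC
  set T := C.filter fun I => I.card = 1 with hT
  set t := T.biUnion id with ht
  have hmem : ∀ a, a ∈ t ↔ ({a} : Finset V) ∈ C := by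
    intro a
    simp only [ht, mem_biUnion, id]
    constructor
    · rintro ⟨I, hI, haI⟩
      rw [hT, mem_filter] at hI
      obtain ⟨c, rfl⟩ := Finset.card_eq_one.mp hI.2
      rw [Finset.mem_singleton] at haI; subst haI; exact hI.1
    · intro h
      exact ⟨{a}, by simp [hT, mem_filter, h], by simp⟩
  have hclique : G.IsClique (t : Set V) := by
    intro a ha b hb hab
    simp only [Finset.mem_coe, hmem] at ha hb
    by_contra hadj
    obtain ⟨hcol', hcard'⟩ := merge_coloring G C hcol hab hadj ha hb
    have hb2 : RBounded 2 (insert ({a, b} : Finset V) ((C.erase {a}).erase {b})) := by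
      intro I hI
      rcases Finset.mem_insert.mp hI with rfl | hI
      · exact (Finset.card_insert_le _ _).trans (by simp)
      · exact hbdd I (Finset.mem_of_mem_erase (Finset.mem_of_mem_erase hI))
    have hle : chiR G 2 ≤ (insert ({a, b} : Finset V) ((C.erase {a}).erase {b})).card :=
      Nat.sInf_le ⟨_, hcol', hb2, rfl⟩
    omega
  have hcardt : T.card ≤ t.card := by
    rw [ht, Finset.card_biUnion]
    · apply le_of_eq
      rw [Finset.sum_congr rfl (fun I hI => by
        rw [hT, mem_filter] at hI
        simpa using hI.2 : ∀ I ∈ T, (id I).card = 1)]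
      simp
    · intro I hI J hJ hIJ
      show Disjoint I J
      rw [Finset.disjoint_left]
      intro x hxI hxJ
      have hIC : I ∈ C := (mem_filter.mp hI).1
      have hJC : J ∈ C := (mem_filter.mp hJ).1
      exact hIJ ((hcol.2.1 x).unique ⟨hIC, hxI⟩ ⟨hJC, hxJ⟩)
  calc T.card ≤ t.card := hcardt
    _ ≤ G.cliqueNum := hclique.card_le_cliqueNum

lemma cliqueNum_le_maxDegree (G : SimpleGraph V) [DecidableRel G.Adj] :
    G.cliqueNum ≤ G.maxDegree + 1 := by
  obtain ⟨s, hs, hcard⟩ := G.exists_isNClique_cliqueNum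
  rcases s.eq_empty_or_nonempty with rfl | ⟨v, hv⟩
  · simp at hcard; omega
  · have hsub : s.erase v ⊆ G.neighborFinset v := by
      intro w hw
      rw [SimpleGraph.mem_neighborFinset]
      exact hs (Finset.mem_of_mem_erase hw) hv (Finset.mem_erase.mp hw).1 |>.symm
    have := Finset.card_le_card hsub
    rw [Finset.card_erase_of_mem hv, SimpleGraph.card_neighborFinset_eq_degree] at this
    have hd := G.degree_le_maxDegree v
    omega

theorem statement_18 (G : SimpleGraph V) [DecidableRel G.Adj] :
    (stinginessR G 2 : ℝ) ≤ ((G.cliqueNum : ℝ) + G.maxDegree + 1) / 2 := by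
  have h1 : stinginessR G 2 ≤ G.cliqueNum := by
    apply csSup_le'
    rintro n ⟨C, hC, rfl⟩
    exact singleton_clique G C hC
  have h2 := cliqueNum_le_maxDegree G
  have h1' : (stinginessR G 2 : ℝ) ≤ G.cliqueNum := by exact_mod_cast h1
  have h2' : (G.cliqueNum : ℝ) ≤ G.maxDegree + 1 := by exact_mod_cast h2
  linarith
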